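/- Let λ > 0 and define f: [0,1] → ℝ by f(ω) = R_B(ω) − λ R_E(ω), where R_B(ω) = 1/4 + (1/2)min(ω,1−ω) and R_E(ω) = (13/4)ω on [0,3/13], = 3/4 on [3/13,10/13], = (13/4)(1−ω) on [10/13,1]. Then the minimum of f over [0,1] equals 1/4 if λ ≤ 2/13 and equals 19/52 − (3/4)λ if λ ≥ 2/13; moreover, if λ > 2/13 the set of minimizers of f is exactly {3/13, 10/13}, and if λ < 2/13 it is exactly {0, 1}. -/
import Mathlib


/-- Bob's integrated Bayes risk under the randomised response mechanism q^(ω). -/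
noncomputable def RBfun (ω : ℝ) : ℝ := 1/4 + (1/2) * min ω (1 - ω)

/-- Eve's integrated Bayes risk under the randomised response mechanism q^(ω):
(13/4)ω on [0, 3/13], 3/4 on [3/13, 10/13], (13/4)(1-ω) on [10/13, 1]. -/
noncomputable def REfun (ω : ℝ) : ℝ :=
  if ω ≤ 3/13 then 13/4 * ω else if ω ≤ 10/13 then 3/4 else 13/4 * (1 - ω)

lemma lb1 (lam ω : ℝ) (hl0 : 0 ≤ lam) (hl : lam ≤ 2/13) (h0 : 0 ≤ ω) (h1 : ω ≤ 1) :
    1/4 ≤ RBfun ω - lam * REfun ω := by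
  unfold RBfun REfun
  rcases le_total ω (1 - ω) with hm | hm <;>
    [rw [min_eq_left hm]; rw [min_eq_right hm]] <;>
  split_ifs with h h' <;>
  nlinarith [mul_nonneg (sub_nonneg.2 hl) h0, mul_nonneg (sub_nonneg.2 hl) (sub_nonneg.2 h1),
    mul_nonneg hl0 h0, mul_nonneg hl0 (sub_nonneg.2 h1)]

lemma lb2 (lam ω : ℝ) (hl : 2/13 ≤ lam) (h0 : 0 ≤ ω) (h1 : ω ≤ 1) :
    19/52 - 3/4 * lam ≤ RBfun ω - lam * REfun ω := by
  unfold RBfun REfun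
  rcases le_total ω (1 - ω) with hm | hm <;>
    [rw [min_eq_left hm]; rw [min_eq_right hm]] <;>
  split_ifs with h h'
  · nlinarith [mul_nonneg (sub_nonneg.2 hl) (sub_nonneg.2 h)]
  · nlinarith [le_of_not_ge h]
  · nlinarith
  · nlinarith [mul_nonneg (sub_nonneg.2 hl) (sub_nonneg.2 h)]
  · nlinarith
  · nlinarith [mul_nonneg (sub_nonneg.2 hl) (sub_nonneg.2 (le_of_not_ge h'))]

lemma lb2' (lam ω : ℝ) (hl : 2/13 < lam) (h0 : 0 ≤ ω) (h1 : ω ≤ 1)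
    (hne1 : ω ≠ 3/13) (hne2 : ω ≠ 10/13) :
    19/52 - 3/4 * lam < RBfun ω - lam * REfun ω := by
  unfold RBfun REfun
  rcases le_total ω (1 - ω) with hm | hm <;>
    [rw [min_eq_left hm]; rw [min_eq_right hm]] <;>
  split_ifs with h h'
  · have : ω < 3/13 := lt_of_le_of_ne h hne1
    nlinarith [mul_pos (sub_pos.2 hl) (sub_pos.2 this)]
  · have : 3/13 < ω := lt_of_le_of_ne (le_of_not_ge h) (Ne.symm hne1)
    nlinarith
  · nlinarith
  · have : ω < 3/13 := lt_of_le_of_ne h hne1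
    nlinarith [mul_pos (sub_pos.2 hl) (sub_pos.2 this)]
  · have : ω < 10/13 := lt_of_le_of_ne h' hne2
    nlinarith
  · have : 10/13 < ω := lt_of_le_of_ne (le_of_not_ge h') (Ne.symm hne2)
    nlinarith [mul_pos (sub_pos.2 hl) (sub_pos.2 this)]

lemma lb1' (lam ω : ℝ) (hl0 : 0 < lam) (hl : lam < 2/13) (h0 : 0 ≤ ω) (h1 : ω ≤ 1)
    (hne0 : ω ≠ 0) (hne1 : ω ≠ 1) :
    1/4 < RBfun ω - lam * REfun ω := by
  have h0' : 0 < ω := lt_of_le_of_ne h0 (Ne.symm hne0)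
  have h1' : ω < 1 := lt_of_le_of_ne h1 hne1
  unfold RBfun REfun
  rcases le_total ω (1 - ω) with hm | hm <;>
    [rw [min_eq_left hm]; rw [min_eq_right hm]] <;>
  split_ifs with h h'
  · nlinarith [mul_pos (sub_pos.2 hl) h0']
  · nlinarith [mul_pos hl0 h0', (le_of_not_ge h : (3:ℝ)/13 ≤ ω)]
  · nlinarith
  · nlinarith [mul_pos (sub_pos.2 hl) h0']
  · nlinarith
  · nlinarith [mul_pos (sub_pos.2 hl) (sub_pos.2 h1')]

lemma val0 (lam : ℝ) : RBfun 0 - lam * REfun 0 = 1/4 := by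
  unfold RBfun REfun; norm_num

lemma val1 (lam : ℝ) : RBfun 1 - lam * REfun 1 = 1/4 := by
  unfold RBfun REfun; norm_num

lemma val3 (lam : ℝ) : RBfun (3/13) - lam * REfun (3/13) = 19/52 - 3/4 * lam := by
  unfold RBfun REfun
  rw [min_eq_left (by norm_num), if_pos (by norm_num)]
  ring

lemma val10 (lam : ℝ) : RBfun (10/13) - lam * REfun (10/13) = 19/52 - 3/4 * lam := by
  unfold RBfun REfun
  rw [min_eq_right (by norm_num), if_neg (by norm_num), if_pos (by norm_num)]
  ring

/-- Optimization of Alice's risk f(ω) = R_B(ω) - λ R_E(ω) over the randomised response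
family: the minimum over [0,1] is 1/4 when λ ≤ 2/13 and 19/52 - (3/4)λ when λ ≥ 2/13;
the set of minimizers is exactly {3/13, 10/13} when λ > 2/13 and exactly {0, 1} when
λ < 2/13. -/
theorem rr_optimization (lam : ℝ) (hlam : 0 < lam) (f : ℝ → ℝ)
    (hf : ∀ ω, f ω = RBfun ω - lam * REfun ω) :
    (lam ≤ 2/13 → IsLeast (f '' Set.Icc (0:ℝ) 1) (1/4)) ∧
    (2/13 ≤ lam → IsLeast (f '' Set.Icc (0:ℝ) 1) (19/52 - 3/4 * lam)) ∧
    (2/13 < lam →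
      {ω ∈ Set.Icc (0:ℝ) 1 | ∀ ω' ∈ Set.Icc (0:ℝ) 1, f ω ≤ f ω'}
        = ({3/13, 10/13} : Set ℝ)) ∧
    (lam < 2/13 →
      {ω ∈ Set.Icc (0:ℝ) 1 | ∀ ω' ∈ Set.Icc (0:ℝ) 1, f ω ≤ f ω'}
        = ({0, 1} : Set ℝ)) := by
  refine ⟨?_, ?_, ?_, ?_⟩
  · intro hl
    constructor
    · exact ⟨0, by norm_num, by rw [hf]; exact val0 lam⟩
    · rintro x ⟨ω, hω, rfl⟩
      rw [hf]
      exact lb1 lam ω hlam.le hl hω.1 hω.2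
  · intro hl
    constructor
    · exact ⟨3/13, by norm_num, by rw [hf]; exact val3 lam⟩
    · rintro x ⟨ω, hω, rfl⟩
      rw [hf]
      exact lb2 lam ω hl hω.1 hω.2
  · intro hl
    ext ω
    simp only [Set.mem_setOf_eq, Set.mem_insert_iff, Set.mem_singleton_iff]
    constructor
    · rintro ⟨hω, hmin⟩
      by_contra hne
      push_neg at hne
      have h1 : f ω ≤ f (3/13) := hmin _ (by norm_num)
      rw [hf (3/13), val3, hf] at h1
      exact absurd h1 (not_le.2 (lb2' lam ω hl hω.1 hω.2 hne.1 hne.2))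
    · rintro (rfl | rfl)
      · refine ⟨by norm_num, fun ω' hω' => ?_⟩
        rw [hf, hf, val3]
        exact lb2 lam ω' hl.le hω'.1 hω'.2
      · refine ⟨by norm_num, fun ω' hω' => ?_⟩
        rw [hf, hf, val10]
        exact lb2 lam ω' hl.le hω'.1 hω'.2
  · intro hl
    ext ω
    simp only [Set.mem_setOf_eq, Set.mem_insert_iff, Set.mem_singleton_iff]
    constructor
    · rintro ⟨hω, hmin⟩
      by_contra hne
      push_neg at hne
      have h1 : f ω ≤ f 0 := hmin _ (by norm_num)
      rw [hf 0, val0, hf] at h1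
      exact absurd h1 (not_le.2 (lb1' lam ω hlam hl hω.1 hω.2 hne.1 hne.2))
    · rintro (rfl | rfl)
      · refine ⟨by norm_num, fun ω' hω' => ?_⟩
        rw [hf, hf, val0]
        exact lb1 lam ω' hlam.le hl.le hω'.1 hω'.2
      · refine ⟨by norm_num, fun ω' hω' => ?_⟩
        rw [hf, hf, val1]
        exact lb1 lam ω' hlam.le hl.le hω'.1 hω'.2
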